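/- arXiv:2001.05095 — 3 statements merged into one kernel-verified Lean document; each statement's English description precedes it below -/
import Mathlib

section
/- Let σ > 1, χ ∈ (0,1), λ ∈ (0,1). Define Ω♭(χ) = σ + (σ−1)χ and Θ = σ(2σ−1) + Ω♭(χ)·(3 + σ((σ+1)χ² + (4σ−5)χ + σ − 5)). If χ and λ satisfy Ω(χ,λ) = 0 (i.e., (1−χ) = ((σ−1)+σχ)λ with λ ∈ (0,1)), then Θ > 0. -/
theorem stmt_15 (σ χ lam : ℝ) (hσ : 1 < σ) (hχ : χ ∈ Set.Ioo (0:ℝ) 1)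
    (hlam : lam ∈ Set.Ioo (0:ℝ) 1)
    (hbif : 1 - χ = ((σ - 1) + σ * χ) * lam) :
    0 < σ * (2 * σ - 1) +
      (σ + (σ - 1) * χ) * (3 + σ * ((σ + 1) * χ ^ 2 + (4 * σ - 5) * χ + σ - 5)) := by
  obtain ⟨hχ0, hχ1⟩ := hχ
  obtain ⟨hl0, hl1⟩ := hlam
  have hden : (0:ℝ) < (σ - 1) + σ * χ := by nlinarith
  have hkey : 2 - σ < (σ + 1) * χ := by nlinarith [mul_lt_mul_of_pos_left hl1 hden]
  nlinarith [sq_nonneg (σ - 1), sq_nonneg χ, sq_nonneg (1 - χ), mul_pos hχ0 (sub_pos.mpr hσ), sq_nonneg ((σ+1)*χ - (2 - σ)), mul_pos (mul_pos hχ0 hχ0) (sub_pos.mpr hσ), sq_nonneg (σ*χ - 1), sq_nonneg (σ + (σ+1)*χ - 2)]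
end

section
/- Let σ > 1 and define ω(φ, ψ) = Ω(χ(φ), λ(ψ)) with χ(φ) = (1−φ)/(1+φ), λ(ψ) = (1−ψ)/(1+ψ), Ω(s,t) = (−(1−s)+((σ−1)+σs)t)/(σ+(σ−1)s). Then ∂ω/∂φ < 0 and ∂ω/∂ψ < 0 at every (φ,ψ) ∈ (0,1)²; explicitly ∂ω/∂φ = −((1+λ)(2σ−1)/(σ+(σ−1)χ)²)·(2/(1+φ)²) and ∂ω/∂ψ = −(((σ−1)+σχ)/(σ+(σ−1)χ))·(2/(1+ψ)²). -/
noncomputable def Omega (σ s t : ℝ) : ℝ :=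
  (-(1 - s) + ((σ - 1) + σ * s) * t) / (σ + (σ - 1) * s)

lemma moebius_deriv (u : ℝ) (hu : (1:ℝ) + u ≠ 0) :
    HasDerivAt (fun x : ℝ => (1 - x) / (1 + x)) (-2 / (1 + u) ^ 2) u := by
  have h1 : HasDerivAt (fun x : ℝ => 1 - x) (-1) u := by
    simpa using (hasDerivAt_id' u).const_sub (1:ℝ)
  have h2 : HasDerivAt (fun x : ℝ => 1 + x) 1 u := by
    simpa using (hasDerivAt_id' u).const_add (1:ℝ)
  have := h1.div h2 hu
  exact this.congr_deriv (by ring)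

theorem stmt_16 (σ : ℝ) (hσ : 1 < σ) (φ ψ : ℝ) (hφ : φ ∈ Set.Ioo (0:ℝ) 1)
    (hψ : ψ ∈ Set.Ioo (0:ℝ) 1) :
    let χ := (1 - φ) / (1 + φ)
    let lam := (1 - ψ) / (1 + ψ)
    let dφ := -((1 + lam) * (2 * σ - 1) / (σ + (σ - 1) * χ) ^ 2) * (2 / (1 + φ) ^ 2)
    let dψ := -(((σ - 1) + σ * χ) / (σ + (σ - 1) * χ)) * (2 / (1 + ψ) ^ 2)
    HasDerivAt (fun u : ℝ => Omega σ ((1 - u) / (1 + u)) lam) dφ φ ∧ dφ < 0 ∧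
    HasDerivAt (fun u : ℝ => Omega σ χ ((1 - u) / (1 + u))) dψ ψ ∧ dψ < 0 := by
  intro χ lam dφ dψ
  obtain ⟨hφ0, hφ1⟩ := hφ
  obtain ⟨hψ0, hψ1⟩ := hψ
  have hφd : (0:ℝ) < 1 + φ := by linarith
  have hψd : (0:ℝ) < 1 + ψ := by linarith
  have hχpos : 0 < χ := div_pos (by linarith) hφd
  have hlampos : 0 < lam := div_pos (by linarith) hψd
  have hD : 0 < σ + (σ - 1) * χ := by nlinarith
  have hDne : σ + (σ - 1) * χ ≠ 0 := ne_of_gt hD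
  -- derivative of Omega in s at χ, with t = lam fixed
  have hOs : HasDerivAt (fun s : ℝ => Omega σ s lam)
      ((1 + lam) * (2 * σ - 1) / (σ + (σ - 1) * χ) ^ 2) χ := by
    have hnum : HasDerivAt (fun s : ℝ => -(1 - s) + ((σ - 1) + σ * s) * lam)
        (1 + σ * lam) χ := by
      have h1 : HasDerivAt (fun s : ℝ => -(1 - s)) 1 χ := by
        exact ((hasDerivAt_id' χ).const_sub (1:ℝ)).neg.congr_deriv (by ring)
      have h2 : HasDerivAt (fun s : ℝ => ((σ - 1) + σ * s) * lam) (σ * lam) χ := by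
        have : HasDerivAt (fun s : ℝ => (σ - 1) + σ * s) σ χ := by
          simpa using ((hasDerivAt_id' χ).const_mul σ).const_add (σ - 1)
        simpa using this.mul_const lam
      exact h1.add h2
    have hden : HasDerivAt (fun s : ℝ => σ + (σ - 1) * s) (σ - 1) χ := by
      simpa using ((hasDerivAt_id' χ).const_mul (σ - 1)).const_add σ
    have := hnum.div hden hDne
    unfold Omega
    exact this.congr_deriv (by ring)
  have hmφ := moebius_deriv φ (ne_of_gt hφd)
  have hdφ : HasDerivAt (fun u : ℝ => Omega σ ((1 - u) / (1 + u)) lam) dφ φ := by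
    have := hOs.comp φ hmφ
    refine (this.congr_deriv ?_ : HasDerivAt _ dφ φ)
    simp only [dφ]
    ring
  have hdφneg : dφ < 0 := by
    have h1 : 0 < (1 + lam) * (2 * σ - 1) / (σ + (σ - 1) * χ) ^ 2 :=
      div_pos (by nlinarith) (by positivity)
    have h2 : 0 < 2 / (1 + φ) ^ 2 := by positivity
    simp only [dφ]
    nlinarith
  -- second part
  have hN : 0 < (σ - 1) + σ * χ := by nlinarith
  have hmψ := moebius_deriv ψ (ne_of_gt hψd)
  have hdψ : HasDerivAt (fun u : ℝ => Omega σ χ ((1 - u) / (1 + u))) dψ ψ := by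
    have h1 : HasDerivAt
        (fun u : ℝ => (-(1 - χ) + ((σ - 1) + σ * χ) * ((1 - u) / (1 + u))) /
          (σ + (σ - 1) * χ))
        ((((σ - 1) + σ * χ) * (-2 / (1 + ψ) ^ 2)) / (σ + (σ - 1) * χ)) ψ := by
      exact (((hmψ.const_mul ((σ - 1) + σ * χ)).const_add (-(1 - χ))).div_const _)
    unfold Omega
    convert h1 using 1
    show dψ = _
    simp only [dψ]
    field_simp
  have hdψneg : dψ < 0 := by
    have h1 : 0 < ((σ - 1) + σ * χ) / (σ + (σ - 1) * χ) := div_pos hN hD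
    have h2 : 0 < 2 / (1 + ψ) ^ 2 := by positivity
    simp only [dψ]
    nlinarith
  exact ⟨hdφ, hdφneg, hdψ, hdψneg⟩
end

section
/- Let M be an n×n matrix with strictly positive entries m_{ij} > 0 and column sums equal to 1 restricted as follows: m_{ij} = a_i^{σ−1} w_i^{1−σ} φ_{ij} / ∑ₗ a_l^{σ−1} w_l^{1−σ} φ_{lj} with a_i, w_i, φ_{ij} > 0 and σ > 1. Then the excess demand Ψᵢ(w) = (1/wᵢ)(∑ₖ m_{ik} wₖ xₖ − wᵢ xᵢ) has the gross substitute property: ∂Ψᵢ/∂wⱼ > 0 for all i ≠ j, provided x ≥ 0 with xₖ > 0 for some k. -/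
open Finset

theorem stmt_18 (n : ℕ) (σ : ℝ) (hσ : 1 < σ)
    (a : Fin n → ℝ) (φm : Fin n → Fin n → ℝ) (x : Fin n → ℝ)
    (ha : ∀ i, 0 < a i) (hφ : ∀ i j, 0 < φm i j)
    (hx : ∀ i, 0 ≤ x i) (hx' : ∃ k, 0 < x k)
    (w : Fin n → ℝ) (hw : ∀ i, 0 < w i) (i j : Fin n) (hij : i ≠ j) :
    0 < deriv (fun t : ℝ =>
      (1 / Function.update w j t i) *
        ((∑ k, (a i ^ (σ - 1) * Function.update w j t i ^ (1 - σ) * φm i k /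
            ∑ l, a l ^ (σ - 1) * Function.update w j t l ^ (1 - σ) * φm l k) *
          (Function.update w j t k * x k)) -
          Function.update w j t i * x i)) (w j) := by
  have hwj : (0:ℝ) < w j := hw j
  set c : Fin n → ℝ := fun k => a i ^ (σ - 1) * w i ^ (1 - σ) * φm i k with hc
  set A : Fin n → ℝ := fun k => ∑ l ∈ univ.erase j, a l ^ (σ - 1) * w l ^ (1 - σ) * φm l k with hA
  set B : Fin n → ℝ := fun k => a j ^ (σ - 1) * φm j k with hB
  set D : Fin n → ℝ → ℝ := fun k t => A k + B k * t ^ (1 - σ) with hD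
  set dD : Fin n → ℝ := fun k => B k * ((1 - σ) * w j ^ (1 - σ - 1)) with hdD
  have hcpos : ∀ k, 0 < c k := fun k =>
    mul_pos (mul_pos (Real.rpow_pos_of_pos (ha i) _) (Real.rpow_pos_of_pos (hw i) _)) (hφ i k)
  have hBpos : ∀ k, 0 < B k := fun k =>
    mul_pos (Real.rpow_pos_of_pos (ha j) _) (hφ j k)
  have hAnn : ∀ k, 0 ≤ A k := fun k => Finset.sum_nonneg fun l _ =>
    (mul_pos (mul_pos (Real.rpow_pos_of_pos (ha l) _) (Real.rpow_pos_of_pos (hw l) _)) (hφ l k)).le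
  have hDpos : ∀ k, 0 < D k (w j) :=
    fun k => add_pos_of_nonneg_of_pos (hAnn k)
      (mul_pos (hBpos k) (Real.rpow_pos_of_pos hwj _))
  have hdDneg : ∀ k, dD k < 0 := fun k =>
    mul_neg_of_pos_of_neg (hBpos k)
      (mul_neg_of_neg_of_pos (by linarith) (Real.rpow_pos_of_pos hwj _))
  -- derivative of D k
  have hDderiv : ∀ k, HasDerivAt (fun t => D k t) (dD k) (w j) := by
    intro k
    have h := ((Real.hasDerivAt_rpow_const (x := w j) (p := 1 - σ)
      (Or.inl hwj.ne')).const_mul (B k)).const_add (A k)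
    simpa [hD, hdD, mul_assoc] using h
  -- derivative of numerator
  have hNderiv : ∀ k, HasDerivAt (fun t : ℝ => (if k = j then t else w k) * x k)
      (if k = j then x k else 0) (w j) := by
    intro k
    by_cases hk : k = j
    · simpa [hk] using (hasDerivAt_id (w j)).mul_const (x k)
    · simpa [hk] using hasDerivAt_const (w j) (w k * x k)
  set v : Fin n → ℝ := fun k =>
    (c k * (if k = j then x k else 0) * D k (w j) -
      c k * ((if k = j then w j else w k) * x k) * dD k) / D k (w j) ^ 2 with hv
  have hFderiv : ∀ k, HasDerivAt
      (fun t => c k * ((if k = j then t else w k) * x k) / D k t) (v k) (w j) := by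
    intro k
    have h := ((hNderiv k).const_mul (c k)).fun_div (hDderiv k) (hDpos k).ne'
    simpa [hv] using h
  have hV : HasDerivAt (fun t : ℝ =>
      1 / w i * ((∑ k, c k * ((if k = j then t else w k) * x k) / D k t) - w i * x i))
      (1 / w i * ∑ k, v k) (w j) :=
    ((HasDerivAt.fun_sum fun k _ => hFderiv k).sub_const (w i * x i)).const_mul (1 / w i)
  -- rewrite the original function
  have hsum : ∀ (t : ℝ) (k : Fin n),
      (∑ l, a l ^ (σ - 1) * Function.update w j t l ^ (1 - σ) * φm l k) = D k t := by
    intro t k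
    rw [← Finset.sum_erase_add _ _ (Finset.mem_univ j)]
    simp only [hD, hA, hB]
    congr 1
    · exact Finset.sum_congr rfl fun l hl => by
        rw [Function.update_of_ne (Finset.ne_of_mem_erase hl)]
    · rw [Function.update_self]; ring
  have hfun : (fun t : ℝ =>
      (1 / Function.update w j t i) *
        ((∑ k, (a i ^ (σ - 1) * Function.update w j t i ^ (1 - σ) * φm i k /
            ∑ l, a l ^ (σ - 1) * Function.update w j t l ^ (1 - σ) * φm l k) *
          (Function.update w j t k * x k)) -
          Function.update w j t i * x i)) =
      (fun t : ℝ =>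
      1 / w i * ((∑ k, c k * ((if k = j then t else w k) * x k) / D k t) - w i * x i)) := by
    funext t
    rw [Function.update_of_ne hij]
    congr 2
    refine Finset.sum_congr rfl fun k _ => ?_
    rw [hsum t k, Function.update_apply]
    simp only [hc]
    ring
  rw [hfun, hV.deriv]
  -- positivity
  have hq : ∀ k, ∃ q, 0 < q ∧ v k = x k * q := by
    intro k
    by_cases hk : k = j
    · refine ⟨c k * (D k (w j) - w j * dD k) / D k (w j) ^ 2, ?_, ?_⟩
      · exact div_pos (mul_pos (hcpos k)
          (by nlinarith [hDpos k, hdDneg k, hwj])) (pow_pos (hDpos k) 2)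
      · simp only [hv, hk]; simp only [eq_self_iff_true, if_true]; ring
    · refine ⟨-(c k * w k * dD k) / D k (w j) ^ 2, ?_, ?_⟩
      · refine div_pos ?_ (pow_pos (hDpos k) 2)
        have : c k * w k * dD k < 0 :=
          mul_neg_of_pos_of_neg (mul_pos (hcpos k) (hw k)) (hdDneg k)
        linarith
      · simp only [hv, if_neg hk]; ring
  have hvnn : ∀ k, 0 ≤ v k := by
    intro k
    obtain ⟨q, hq1, hq2⟩ := hq k
    rw [hq2]; exact mul_nonneg (hx k) hq1.le
  obtain ⟨k0, hk0⟩ := hx'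
  have hsumpos : 0 < ∑ k, v k := by
    refine Finset.sum_pos' (fun k _ => hvnn k) ⟨k0, Finset.mem_univ k0, ?_⟩
    obtain ⟨q, hq1, hq2⟩ := hq k0
    rw [hq2]; exact mul_pos hk0 hq1
  exact mul_pos (one_div_pos.mpr (hw i)) hsumpos
end
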